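/- Let a, b ∈ ℝ, Q(β) = β(β−1) + aβ + b, and suppose Q(α) ≠ 0. Define the sequences: (recursive) ĉ_n = A/Q(α), ĉ_{n−1} = −nA·Q'(α)/Q(α)², ĉ_i = −((i+1)/Q(α))·[Q'(α)·ĉ_{i+1} + (i+2)·ĉ_{i+2}] for i ≤ n−2; and (closed form) c_i = (−1)^{n−i}·(n!/i!)·(A/Q(α)^{n−i+1})·Σ_{j=0}^{⌊(n−i)/2⌋}(−1)^j·C(n−i−j,j)·Q'(α)^{n−i−2j}·Q(α)^j. Then ĉ_i = c_i for all i = 0,…,n. -/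

import Mathlib

open Finset

private def Tterm (P Q : ℝ) (k j : ℕ) : ℝ :=
  (-1 : ℝ) ^ j * ((k - j).choose j : ℝ) * P ^ (k - 2 * j) * Q ^ j

private def Sfun (P Q : ℝ) (k : ℕ) : ℝ :=
  ∑ j ∈ Finset.range (k / 2 + 1), Tterm P Q k j

private lemma Sfun_ext (P Q : ℝ) (k : ℕ) :
    Sfun P Q k = ∑ j ∈ Finset.range (k + 1), Tterm P Q k j := by
  apply Finset.sum_subset
  · intro j hj; simp only [Finset.mem_range] at *; omega
  · intro j hj hnj
    simp only [Finset.mem_range] at hj hnj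
    have h1 : k - j < j := by omega
    simp [Tterm, Nat.choose_eq_zero_of_lt h1]

private lemma Tterm_step (P Q : ℝ) (k j : ℕ) (hj : j ≤ k) :
    Tterm P Q (k + 2) (j + 1) = P * Tterm P Q (k + 1) (j + 1) - Q * Tterm P Q k j := by
  have h1 : k + 2 - (j + 1) = (k - j) + 1 := by omega
  have h2 : k + 1 - (j + 1) = k - j := by omega
  have h3 : (k + 2) - 2 * (j + 1) = k - 2 * j := by omega
  have pascal : ((k - j) + 1).choose (j + 1) = (k - j).choose j + (k - j).choose (j + 1) :=
    Nat.choose_succ_succ' (k - j) j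
  by_cases h : j + 1 ≤ k - j
  · have h4 : (k + 1) - 2 * (j + 1) + 1 = k - 2 * j := by omega
    simp only [Tterm, h1, h2, h3, pascal]
    rw [← h4, pow_succ]
    push_cast
    ring
  · have hz : (k - j).choose (j + 1) = 0 := Nat.choose_eq_zero_of_lt (by omega)
    simp only [Tterm, h1, h2, h3, pascal, hz]
    push_cast
    ring

private lemma Sfun_rec (P Q : ℝ) (k : ℕ) :
    Sfun P Q (k + 2) = P * Sfun P Q (k + 1) - Q * Sfun P Q k := by
  rw [Sfun_ext, Sfun_ext, Sfun_ext, Finset.mul_sum, Finset.mul_sum]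
  rw [Finset.sum_range_succ' (fun j => Tterm P Q (k + 2) j) (k + 2)]
  rw [Finset.sum_range_succ (fun j => Tterm P Q (k + 2) (j + 1)) (k + 1)]
  rw [Finset.sum_range_succ' (fun j => P * Tterm P Q (k + 1) j) (k + 1)]
  have htop : Tterm P Q (k + 2) (k + 1 + 1) = 0 := by
    simp [Tterm, Nat.choose_eq_zero_of_lt (show (k+2) - (k+2) < k + 2 by omega)]
  have h0 : Tterm P Q (k + 2) 0 = P * Tterm P Q (k + 1) 0 := by
    simp [Tterm, pow_succ]; ring
  rw [htop, h0]
  have hsum : ∑ j ∈ Finset.range (k + 1), Tterm P Q (k + 2) (j + 1)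
      = ∑ j ∈ Finset.range (k + 1), (P * Tterm P Q (k + 1) (j + 1) - Q * Tterm P Q k j) := by
    apply Finset.sum_congr rfl
    intro j hj
    exact Tterm_step P Q k j (by simp only [Finset.mem_range] at hj; omega)
  rw [hsum, Finset.sum_sub_distrib]
  ring

/-- the recursive and closed-form coefficients coincide (non-root case). -/
theorem stmt_6 (a b α A : ℝ) (n : ℕ) (hA : A ≠ 0)
    (hQ : α * (α - 1) + a * α + b ≠ 0)
    (chat : ℕ → ℝ)
    (hcn : chat n = A / (α * (α - 1) + a * α + b))
    (hcn1 : 1 ≤ n →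
      chat (n - 1) = -(n : ℝ) * A * (2 * α + a - 1) / (α * (α - 1) + a * α + b) ^ 2)
    (hrec : ∀ i, i + 2 ≤ n →
      chat i = -(((i : ℝ) + 1) / (α * (α - 1) + a * α + b)) *
        ((2 * α + a - 1) * chat (i + 1) + ((i : ℝ) + 2) * chat (i + 2))) :
    ∀ i ≤ n,
      chat i = (-1 : ℝ) ^ (n - i) * ((n.factorial : ℝ) / (i.factorial : ℝ)) *
        (A / (α * (α - 1) + a * α + b) ^ (n - i + 1)) *
        ∑ j ∈ Finset.range ((n - i) / 2 + 1),
          (-1 : ℝ) ^ j * ((n - i - j).choose j : ℝ) *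
            (2 * α + a - 1) ^ (n - i - 2 * j) * (α * (α - 1) + a * α + b) ^ j := by
  set Q := α * (α - 1) + a * α + b with hQdef
  set P := 2 * α + a - 1 with hPdef
  have key : ∀ k, ∀ i, i + k = n → chat i =
      (-1 : ℝ) ^ k * ((n.factorial : ℝ) / (i.factorial : ℝ)) * (A / Q ^ (k + 1)) *
        Sfun P Q k := by
    intro k
    induction k using Nat.strong_induction_on with
    | _ k ih =>
      match k with
      | 0 =>
        intro i hi
        have : i = n := by omega
        subst this
        have hS : Sfun P Q 0 = 1 := by simp [Sfun, Tterm]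
        rw [hcn, hS]
        have hf : (i.factorial : ℝ) ≠ 0 := Nat.cast_ne_zero.mpr i.factorial_ne_zero
        field_simp
        ring
      | 1 =>
        intro i hi
        have hn : n = i + 1 := by omega
        have h1 : n - 1 = i := by omega
        have hS : Sfun P Q 1 = P := by simp [Sfun, Tterm]
        have hc := hcn1 (by omega)
        rw [h1] at hc
        rw [hc, hS]
        have hfact : (n.factorial : ℝ) = (i + 1) * (i.factorial : ℝ) := by
          rw [hn]; push_cast [Nat.factorial_succ]; ring
        have hif : (i.factorial : ℝ) ≠ 0 := Nat.cast_ne_zero.mpr i.factorial_ne_zero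
        rw [hfact, hn]
        push_cast
        field_simp
      | (k + 2) =>
        intro i hi
        have hc1 := ih (k + 1) (by omega) (i + 1) (by omega)
        have hc2 := ih k (by omega) (i + 2) (by omega)
        rw [hrec i (by omega), hc1, hc2, Sfun_rec]
        have hf1 : ((i + 1).factorial : ℝ) = (i + 1) * (i.factorial : ℝ) := by
          push_cast [Nat.factorial_succ]; ring
        have hf2 : ((i + 2).factorial : ℝ) = (i + 2) * (i + 1) * (i.factorial : ℝ) := by
          push_cast [Nat.factorial_succ]; ring
        have hif : (i.factorial : ℝ) ≠ 0 := Nat.cast_ne_zero.mpr i.factorial_ne_zero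
        rw [hf1, hf2]
        push_cast
        field_simp
        ring
  intro i hi
  have h := key (n - i) i (by omega)
  rw [h]
  simp only [Sfun, Tterm]
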